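/- For the Lie algebra of Theorem B(2) with k ≥ 2 — basis x₁,…,x_{2k+1}, n₁,…,n_{2k-1}, m, nonzero brackets [xᵢ,x_{i+1}] = -nᵢ, [xᵢ,nᵢ] = -m (1 ≤ i ≤ 2k-1), [x_{2k},x_{2k+1}] = -m — the Jacobi identity holds, defining a nilpotent Lie algebra. -/
import Mathlib


/-- Index type for the basis `x₁,…,x_{2k+1}, n₁,…,n_{2k-1}, m` of the Lie algebra of
Theorem B(2); it has `4k+1` elements. -/
abbrev Jk (k : ℕ) := Fin (2 * k + 1) ⊕ Fin (2 * k - 1) ⊕ Unit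

def f1 (k : ℕ) (j : Fin (2 * k - 1)) : Fin (2 * k + 1) := ⟨j.1, by have := j.2; omega⟩

def f2 (k : ℕ) (j : Fin (2 * k - 1)) : Fin (2 * k + 1) := ⟨j.1 + 1, by have := j.2; omega⟩

/-- The bracket of Theorem B(2): `[xᵢ, x_{i+1}] = -nᵢ`, `[xᵢ, nᵢ] = -m` for
`1 ≤ i ≤ 2k-1`, and `[x_{2k}, x_{2k+1}] = -m` (0-based: indices `2k-1` and `2k`). -/
def B2 (k : ℕ) (u v : Jk k → ℝ) : Jk k → ℝ := fun j =>
  match j with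
  | Sum.inl _ => 0
  | Sum.inr (Sum.inl i) =>
      -(u (Sum.inl (f1 k i)) * v (Sum.inl (f2 k i))
        - u (Sum.inl (f2 k i)) * v (Sum.inl (f1 k i)))
  | Sum.inr (Sum.inr _) =>
      -(∑ i : Fin (2 * k - 1),
          (u (Sum.inl (f1 k i)) * v (Sum.inr (Sum.inl i))
            - u (Sum.inr (Sum.inl i)) * v (Sum.inl (f1 k i))))
      - (u (Sum.inl ⟨2 * k - 1, by omega⟩) * v (Sum.inl ⟨2 * k, by omega⟩)
          - u (Sum.inl ⟨2 * k, by omega⟩) * v (Sum.inl ⟨2 * k - 1, by omega⟩))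

/-- The lower central series of a bracket. -/
def lcs {V : Type*} [AddCommGroup V] [Module ℝ V] (B : V → V → V) : ℕ → Submodule ℝ V
  | 0 => ⊤
  | i + 1 => Submodule.span ℝ {z | ∃ u ∈ lcs B i, ∃ v, z = B u v}

lemma B2_inl (k : ℕ) (u v : Jk k → ℝ) (i : Fin (2 * k + 1)) :
    B2 k u v (Sum.inl i) = 0 := rfl

def W1 (k : ℕ) : Submodule ℝ (Jk k → ℝ) where
  carrier := {u | ∀ i, u (Sum.inl i) = 0}
  add_mem' := by intro a b ha hb i; simp [ha i, hb i]
  zero_mem' := fun i => rfl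
  smul_mem' := by intro c a ha i; simp [ha i]

def W2 (k : ℕ) : Submodule ℝ (Jk k → ℝ) where
  carrier := {u | (∀ i, u (Sum.inl i) = 0) ∧ ∀ i, u (Sum.inr (Sum.inl i)) = 0}
  add_mem' := by
    intro a b ha hb
    exact ⟨fun i => by simp [ha.1 i, hb.1 i], fun i => by simp [ha.2 i, hb.2 i]⟩
  zero_mem' := ⟨fun i => rfl, fun i => rfl⟩
  smul_mem' := by
    intro c a ha
    exact ⟨fun i => by simp [ha.1 i], fun i => by simp [ha.2 i]⟩

theorem stmt11 (k : ℕ) (hk : 2 ≤ k) :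
    (∀ u v : Jk k → ℝ, B2 k u v = - B2 k v u) ∧
    (∀ u v w : Jk k → ℝ,
      B2 k u (B2 k v w) + B2 k v (B2 k w u) + B2 k w (B2 k u v) = 0) ∧
    (∃ n : ℕ, lcs (B2 k) n = ⊥) := by
  refine ⟨?_, ?_, ?_⟩
  · intro u v
    funext j
    rcases j with i | i | u'
    · simp [B2]
    · simp [B2]; ring
    · simp only [Pi.neg_apply, B2]
      rw [show (∑ i : Fin (2*k-1), (u (Sum.inl (f1 k i)) * v (Sum.inr (Sum.inl i))
            - u (Sum.inr (Sum.inl i)) * v (Sum.inl (f1 k i))))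
          = -∑ i : Fin (2*k-1), (v (Sum.inl (f1 k i)) * u (Sum.inr (Sum.inl i))
            - v (Sum.inr (Sum.inl i)) * u (Sum.inl (f1 k i))) from by
        rw [← Finset.sum_neg_distrib]; exact Finset.sum_congr rfl fun i _ => by ring]
      ring
  · intro u v w
    funext j
    rcases j with i | i | u'
    · simp [B2]
    · simp [B2]
    · simp only [B2, Pi.add_apply, Pi.zero_apply, mul_zero, zero_mul, sub_zero,
        zero_sub, sub_self, neg_zero, add_zero, neg_neg, sub_neg_eq_add]
      rw [← Finset.sum_neg_distrib, ← Finset.sum_neg_distrib, ← Finset.sum_neg_distrib,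
        ← Finset.sum_add_distrib, ← Finset.sum_add_distrib]
      exact Finset.sum_eq_zero fun i _ => by ring
  · refine ⟨3, ?_⟩
    have h1 : lcs (B2 k) 1 ≤ W1 k := by
      apply Submodule.span_le.2
      rintro z ⟨u, _, v, rfl⟩
      exact fun i => rfl
    have h2 : lcs (B2 k) 2 ≤ W2 k := by
      apply Submodule.span_le.2
      rintro z ⟨u, hu, v, rfl⟩
      have hu1 : ∀ i, u (Sum.inl i) = 0 := h1 hu
      constructor
      · exact fun i => rfl
      · intro i; simp [B2, hu1]
    show Submodule.span ℝ _ = ⊥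
    rw [Submodule.span_eq_bot]
    rintro z ⟨u, hu, v, rfl⟩
    obtain ⟨hu1, hu2⟩ := h2 hu
    funext j
    rcases j with i | i | u'
    · rfl
    · simp [B2, hu1]
    · simp [B2, hu1, hu2]
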